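/- Fix a positive integer r, and define q : ℕ → ℚ for t ≥ r by the recurrence q(t) = (1/t)·(1 + ∑_{s=r+1}^{t} q(s−1)) (in particular q(r) = 1/r). Then q(t) = 1/r for every t ≥ r. (In the Dürr–Høyer minimum-finding algorithm applied to a list of t distinct values — where the first threshold index is chosen uniformly at random and each subsequent threshold is chosen uniformly among the values strictly below the current threshold — q(t) is the probability that the element of rank r is ever chosen as a threshold, and it equals 1/r independently of t.) -/

import Mathlib

/-- In the Dürr–Høyer minimum-finding algorithm on a list of `t` distinct
values, the probability `q t` that the element of rank `r` is ever chosen as a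
threshold satisfies the recurrence `q t = (1/t)(1 + ∑_{s=r+1}^{t} q (s−1))`
for `t ≥ r`, and equals `1/r` independently of `t`. -/
theorem durr_hoyer_rank_probability
    (r : ℕ) (hr : 0 < r) (q : ℕ → ℚ)
    (hq : ∀ t, r ≤ t →
      q t = (1 / t) * (1 + ∑ s ∈ Finset.Icc (r + 1) t, q (s - 1))) :
    ∀ t, r ≤ t → q t = 1 / r := by
  intro t
  induction t using Nat.strong_induction_on with
  | _ t ih =>
    intro ht
    have hsum : ∑ s ∈ Finset.Icc (r + 1) t, q (s - 1)
        = ∑ s ∈ Finset.Icc (r + 1) t, (1 / r : ℚ) := by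
      apply Finset.sum_congr rfl
      intro s hs
      simp only [Finset.mem_Icc] at hs
      exact ih (s - 1) (by omega) (by omega)
    have hcard : (Finset.Icc (r + 1) t).card = t - r := by
      rw [Nat.card_Icc]; omega
    have htr : ((t : ℚ) - r) = ((t - r : ℕ) : ℚ) := by
      push_cast [Nat.cast_sub ht]; ring
    have ht0 : (t : ℚ) ≠ 0 := Nat.cast_ne_zero.mpr (by omega)
    have hr0 : (r : ℚ) ≠ 0 := Nat.cast_ne_zero.mpr (by omega)
    rw [hq t ht, hsum, Finset.sum_const, hcard, nsmul_eq_mul, ← htr]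
    field_simp
    ring
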